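/- Let X be an Archimedean vector lattice. If there exist sequences (a_n), (b_n) in X₊ such that X₊ \ {0} = ⋃_n [a_n, b_n], then the Boolean algebra of bands of X has a countable π-base; in fact {a_n^dd : n ∈ ℕ} is such a π-base (discarding those with a_n = 0). -/

import Mathlib

/-- Disjoint complement of a set in a vector lattice. -/
def dSet {X : Type*} [AddCommGroup X] [Lattice X] (S : Set X) : Set X :=
  {y | ∀ s ∈ S, |y| ⊓ |s| = 0}

/-- The band generated by a set: the double disjoint complement. -/
def ddSet {X : Type*} [AddCommGroup X] [Lattice X] (S : Set X) : Set X :=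
  dSet (dSet S)

/-- A band in a vector lattice: a solid linear subspace closed under existing suprema. -/
def IsBand {X : Type*} [AddCommGroup X] [Lattice X] [Module ℝ X] (B : Set X) : Prop :=
  (0 : X) ∈ B ∧ (∀ x ∈ B, ∀ y ∈ B, x + y ∈ B) ∧ (∀ (c : ℝ), ∀ x ∈ B, c • x ∈ B) ∧
    (∀ x ∈ B, ∀ y : X, |y| ≤ |x| → y ∈ B) ∧
    ∀ A ⊆ B, ∀ s : X, IsLUB A s → s ∈ B

section Aux

variable {X : Type*} [AddCommGroup X] [Lattice X] [CovariantClass X X (· + ·) (· ≤ ·)]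

/-- Riesz-type inequality: `u ⊓ (w + v) ≤ (u ⊓ w) + (u ⊓ v)` for nonnegative elements. -/
lemma aux_inf_add_le {u v w : X} (hu : 0 ≤ u) (hv : 0 ≤ v) (hw : 0 ≤ w) :
    u ⊓ (w + v) ≤ (u ⊓ w) + (u ⊓ v) := by
  rw [add_inf, inf_add, inf_add]
  refine le_inf (le_inf ?_ ?_) (le_inf ?_ ?_)
  · exact inf_le_left.trans (le_add_of_nonneg_right hu)
  · exact inf_le_left.trans (le_add_of_nonneg_left hw)
  · exact inf_le_left.trans (le_add_of_nonneg_right hv)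
  · exact inf_le_right

lemma aux_inf_nsmul_le {u v : X} (hu : 0 ≤ u) (hv : 0 ≤ v) :
    ∀ n : ℕ, u ⊓ n • v ≤ n • (u ⊓ v) := by
  intro n
  induction n with
  | zero => simp
  | succ n ih =>
      rw [succ_nsmul, succ_nsmul]
      calc u ⊓ (n • v + v) ≤ (u ⊓ n • v) + (u ⊓ v) :=
            aux_inf_add_le hu hv (nsmul_nonneg hv n)
        _ ≤ n • (u ⊓ v) + (u ⊓ v) := add_le_add_left ih _

/-- a `dSet` is solid. -/
lemma aux_dSet_solid {S : Set X} {z y : X} (hz : z ∈ dSet S) (h : |y| ≤ |z|) :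
    y ∈ dSet S := fun s hs =>
  le_antisymm ((inf_le_inf_right _ h).trans_eq (hz s hs))
    (le_inf (abs_nonneg y) (abs_nonneg s))

end Aux

section Band

variable {X : Type*} [AddCommGroup X] [Lattice X]
    [CovariantClass X X (· + ·) (· ≤ ·)] [Module ℝ X]

/-- Key lemma: a band containing a nonnegative element `a` contains the band generated by `a`. -/
lemma aux_ddSet_subset_band
    (harch : ∀ x y : X, (∀ n : ℕ, n • x ≤ y) → x ≤ 0)
    {B : Set X} (hB : IsBand B) {a : X} (ha0 : 0 ≤ a) (haB : a ∈ B) :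
    ddSet {a} ⊆ B := by
  obtain ⟨h0, hadd, hsmul, hsolid, hsup⟩ := hB
  -- first: nonnegative elements of a^dd are in B
  have key : ∀ y ∈ ddSet ({a} : Set X), 0 ≤ y → y ∈ B := by
    intro y hy hy0
    have hlub : IsLUB {z | ∃ n : ℕ, z = y ⊓ n • a} y := by
      constructor
      · rintro z ⟨n, rfl⟩; exact inf_le_left
      · intro u hu
        have hu0 : 0 ≤ u := by
          have := hu ⟨0, rfl⟩
          simpa [inf_of_le_right hy0] using this
        set v := y - u ⊓ y with hvdef
        have hv0 : 0 ≤ v := sub_nonneg.2 inf_le_right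
        have hvley : v ≤ y := by
          have : 0 ≤ u ⊓ y := le_inf hu0 hy0
          simpa [hvdef] using sub_le_self y this
        have hvle : ∀ n : ℕ, v ≤ (y - n • a) ⊔ 0 := by
          intro n
          have h1 : y ⊓ n • a ≤ u ⊓ y := le_inf (hu ⟨n, rfl⟩) inf_le_left
          have h2 : v ≤ y - (y ⊓ n • a) := sub_le_sub_left h1 y
          rw [sub_inf, sub_self] at h2
          exact h2.trans (sup_comm _ _).le
        set w := v ⊓ a with hwdef
        have hw0 : 0 ≤ w := le_inf hv0 ha0
        have hwy : ∀ n : ℕ, n • w ≤ y := by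
          intro n
          -- w is disjoint from (n•a - y)⁺
          have hd1 : w ⊓ ((n • a - y) ⊔ 0) = 0 := by
            have hppnp : ((y - n • a) ⊔ 0) ⊓ ((n • a - y) ⊔ 0) = 0 := by
              have := posPart_inf_negPart_eq_zero (y - n • a)
              simpa [posPart, negPart, neg_sub] using this
            refine le_antisymm ?_ (le_inf hw0 le_sup_right)
            calc w ⊓ ((n • a - y) ⊔ 0)
                ≤ ((y - n • a) ⊔ 0) ⊓ ((n • a - y) ⊔ 0) :=
                  inf_le_inf_right _ (inf_le_left.trans (hvle n))
              _ = 0 := hppnp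
          have h3 : n • w - y ≤ (n • a - y) ⊔ 0 :=
            (sub_le_sub_right (nsmul_le_nsmul_right inf_le_right n) y).trans le_sup_left
          have h5 : ((n • w - y) ⊔ 0) ⊓ w = 0 := by
            refine le_antisymm ?_ (le_inf le_sup_right hw0)
            calc ((n • w - y) ⊔ 0) ⊓ w ≤ ((n • a - y) ⊔ 0) ⊓ w :=
                  inf_le_inf_right _ (sup_le h3 le_sup_right)
              _ = 0 := by rw [inf_comm]; exact hd1
          have h6 : (n • w - y) ⊔ 0 ≤ n • w :=
            sup_le (sub_le_self _ hy0) (nsmul_nonneg hw0 n)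
          have h7 : (n • w - y) ⊔ 0 ≤ n • (((n • w - y) ⊔ 0) ⊓ w) := by
            calc (n • w - y) ⊔ 0 = ((n • w - y) ⊔ 0) ⊓ (n • w) := (inf_eq_left.2 h6).symm
              _ ≤ n • (((n • w - y) ⊔ 0) ⊓ w) := aux_inf_nsmul_le le_sup_right hw0 n
          rw [h5, smul_zero] at h7
          have : n • w - y ≤ 0 := le_sup_left.trans h7
          exact sub_nonpos.1 this
        have hwzero : w = 0 := le_antisymm (harch w y hwy) hw0
        have hvd : v ∈ dSet ({a} : Set X) := by
          intro s hs
          rw [Set.mem_singleton_iff] at hs; subst hs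
          rw [abs_of_nonneg hv0, abs_of_nonneg ha0]
          exact hwzero
        have hyv : |y| ⊓ |v| = 0 := hy v hvd
        rw [abs_of_nonneg hy0, abs_of_nonneg hv0] at hyv
        have hvzero : v = 0 := le_antisymm (by
          have : v ≤ y ⊓ v := le_inf hvley le_rfl
          rwa [hyv] at this) hv0
        have : y = u ⊓ y := by
          have h := hvzero
          rw [hvdef, sub_eq_zero] at h
          exact h
        exact this.le.trans inf_le_left
    have hmem : {z | ∃ n : ℕ, z = y ⊓ n • a} ⊆ B := by
      rintro z ⟨n, rfl⟩
      have hna : (n : ℝ) • a ∈ B := hsmul _ a haB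
      refine hsolid _ hna _ ?_
      have h1 : 0 ≤ y ⊓ n • a ⊔ 0 := le_sup_right
      rw [Nat.cast_smul_eq_nsmul, abs_of_nonneg (nsmul_nonneg ha0 n),
        abs_of_nonneg (le_inf hy0 (nsmul_nonneg ha0 n))]
      exact inf_le_right
    exact hsup _ hmem y hlub
  -- now general elements
  intro y hy
  have hpos : (y ⊔ 0) ∈ ddSet ({a} : Set X) :=
    aux_dSet_solid hy (by
      rw [abs_of_nonneg (le_sup_right : (0:X) ≤ y ⊔ 0)]
      exact sup_le (le_abs_self y) (abs_nonneg y))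
  have hneg : ((-y) ⊔ 0) ∈ ddSet ({a} : Set X) :=
    aux_dSet_solid hy (by
      rw [abs_of_nonneg (le_sup_right : (0:X) ≤ (-y) ⊔ 0)]
      exact sup_le (neg_le_abs y) (abs_nonneg y))
  have hposB : (y ⊔ 0) ∈ B := key _ hpos le_sup_right
  have hnegB : ((-y) ⊔ 0) ∈ B := key _ hneg le_sup_right
  have hdecomp : y = (y ⊔ 0) + (-1 : ℝ) • ((-y) ⊔ 0) := by
    rw [neg_smul, one_smul, neg_sup, neg_neg, neg_zero, ← add_comm,
      inf_add_sup, add_zero]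
  rw [hdecomp]
  exact hadd _ hposB _ (hsmul (-1) _ hnegB)

end Band

theorem stmt13 {X : Type*} [AddCommGroup X] [Lattice X]
    [CovariantClass X X (· + ·) (· ≤ ·)] [Module ℝ X] [PosSMulMono ℝ X]
    (harch : ∀ x y : X, (∀ n : ℕ, n • x ≤ y) → x ≤ 0)
    (a b : ℕ → X) (ha : ∀ n, 0 ≤ a n) (hb : ∀ n, 0 ≤ b n)
    (hcover : {x : X | 0 ≤ x ∧ x ≠ 0} = ⋃ n : ℕ, Set.Icc (a n) (b n)) :
    -- {a_n^dd : a_n ≠ 0} is a countable π-base of the Boolean algebra of bands: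
    -- every nonzero band contains some nonzero band a_n^dd
    ∀ B : Set X, IsBand B → B ≠ ({0} : Set X) →
      ∃ n : ℕ, a n ≠ 0 ∧ ddSet {a n} ⊆ B ∧ ddSet {a n} ≠ ({0} : Set X) := by
  -- every a n is nonzero
  have hane : ∀ n, a n ≠ 0 := by
    intro n hn
    have h0mem : (0 : X) ∈ Set.Icc (a n) (b n) := ⟨hn.le, hb n⟩
    have : (0 : X) ∈ {x : X | 0 ≤ x ∧ x ≠ 0} := by
      rw [hcover]; exact Set.mem_iUnion.mpr ⟨n, h0mem⟩
    exact this.2 rfl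
  intro B hB hBne
  -- find a nonzero element of B
  obtain ⟨x, hxB, hxne⟩ : ∃ x ∈ B, x ≠ 0 := by
    by_contra h
    push_neg at h
    apply hBne
    apply Set.eq_of_subset_of_subset
    · intro z hz; exact h z hz
    · intro z hz; rw [Set.mem_singleton_iff] at hz; rw [hz]; exact hB.1
  obtain ⟨h0, hadd, hsmul, hsolid, hsup⟩ := hB
  have habs : |x| ∈ {x : X | 0 ≤ x ∧ x ≠ 0} := ⟨abs_nonneg x, fun h =>
    hxne (le_antisymm ((le_abs_self x).trans h.le)
      (neg_nonpos.1 ((neg_le_abs x).trans h.le)))⟩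
  rw [hcover] at habs
  obtain ⟨n, hn⟩ := Set.mem_iUnion.mp habs
  refine ⟨n, hane n, ?_, ?_⟩
  · -- a n ∈ B, hence its band is in B
    have hanB : a n ∈ B := hsolid x hxB (a n) (by rw [abs_of_nonneg (ha n)]; exact hn.1)
    exact aux_ddSet_subset_band harch ⟨h0, hadd, hsmul, hsolid, hsup⟩ (ha n) hanB
  · -- a n ∈ ddSet {a n} and a n ≠ 0
    intro hcontra
    have : a n ∈ ddSet ({a n} : Set X) := by
      intro s hs
      have := hs (a n) (Set.mem_singleton _)
      rw [inf_comm] at this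
      exact this
    rw [hcontra, Set.mem_singleton_iff] at this
    exact hane n this
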